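/- arXiv:2102.06855 — 3 statements merged into one kernel-verified Lean document; each statement's English description precedes it below -/
import Mathlib

section
/- For every positive integer n and every integer k with 0 ≤ k ≤ n, the quantity (1/4^n)·C(n,k)·C(2n,n)/C(2n,2k) satisfies (1/4^n)·C(n,k)·C(2n,n)/C(2n,2k) ≤ √(8/π²) · 2^{-n·h(k/n)} / √n, where h(p) = -p·log₂ p - (1-p)·log₂(1-p) is the binary entropy function (with the convention 0·log₂0 = 0). -/
open Real Stirling Nat

/-- Binary entropy in bits. -/
noncomputable def binEnt (p : ℝ) : ℝ := -(p * Real.logb 2 p) - (1 - p) * Real.logb 2 (1 - p)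

lemma stirling_ge (m : ℕ) (hm : 1 ≤ m) : Real.sqrt Real.pi ≤ stirlingSeq m := by
  obtain ⟨m', rfl⟩ : ∃ m', m = m' + 1 := ⟨m - 1, by omega⟩
  exact stirlingSeq'_antitone.le_of_tendsto
    (tendsto_stirlingSeq_sqrt_pi.comp (Filter.tendsto_add_atTop_nat 1)) m'

lemma stirling_double_le (m : ℕ) (hm : 1 ≤ m) : stirlingSeq (2*m) ≤ stirlingSeq m := by
  obtain ⟨m', rfl⟩ : ∃ m', m = m' + 1 := ⟨m - 1, by omega⟩
  have h := stirlingSeq'_antitone (show m' ≤ 2*m'+1 by omega)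
  simpa [Function.comp, show 2*(m'+1) = (2*m'+1)+1 by ring] using h

lemma stirling_pos' (m : ℕ) (hm : 1 ≤ m) : 0 < stirlingSeq m := by
  obtain ⟨m', rfl⟩ : ∃ m', m = m' + 1 := ⟨m - 1, by omega⟩
  exact stirlingSeq'_pos m'

lemma stirling_sq_ge (m : ℕ) (hm : 1 ≤ m) : Real.pi ≤ (stirlingSeq m)^2 := by
  have h := stirling_ge m hm
  nlinarith [Real.sq_sqrt Real.pi_pos.le, Real.sqrt_nonneg Real.pi]

lemma fact_sq' (m : ℕ) (hm : 1 ≤ m) :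
    ((m ! : ℝ))^2 = (stirlingSeq m)^2 * (2*(m:ℝ)) * (m:ℝ)^(2*m) / Real.exp 1 ^ (2*m) := by
  have hm0 : (0:ℝ) < m := by exact_mod_cast hm
  have hs : Real.sqrt (2*(m:ℝ)) ^ 2 = 2*(m:ℝ) := Real.sq_sqrt (by positivity)
  have h1 : ((m:ℝ)/Real.exp 1)^m ≠ 0 := by positivity
  rw [stirlingSeq, div_pow, mul_pow, hs]
  field_simp
  rw [← Real.exp_nat_mul]
  push_cast
  ring_nf
  have he : Real.exp 1 ^ (m*2) = Real.exp (↑m*2) := by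
    rw [← Real.exp_nat_mul]; congr 1; push_cast; ring
  rw [inv_pow, he, mul_assoc, inv_mul_cancel₀ (Real.exp_pos _).ne', mul_one]

lemma kt_cast_eq (k j : ℕ) :
    (1 / 4 ^ (k+j) : ℝ) * ((k+j).choose k : ℝ) * ((2*(k+j)).choose (k+j) : ℝ) /
        ((2*(k+j)).choose (2*k) : ℝ)
      = ((2*k)! : ℝ) * ((2*j)! : ℝ) / (((k)! : ℝ) * ((j)! : ℝ) * (((k+j))! : ℝ) * 4^(k+j)) := by
  rw [Nat.cast_choose ℝ (Nat.le_add_right k j),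
      Nat.cast_choose ℝ (by omega : k+j ≤ 2*(k+j)),
      Nat.cast_choose ℝ (by omega : 2*k ≤ 2*(k+j)),
      show (k+j)-k = j from by omega, show 2*(k+j)-(k+j) = k+j from by omega,
      show 2*(k+j)-2*k = 2*j from by omega]
  have h1 : ((k ! : ℝ)) ≠ 0 := by exact_mod_cast (Nat.factorial_ne_zero k)
  have h2 : ((j ! : ℝ)) ≠ 0 := by exact_mod_cast (Nat.factorial_ne_zero j)
  have h3 : (((k+j) ! : ℝ)) ≠ 0 := by exact_mod_cast (Nat.factorial_ne_zero (k+j))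
  have h4 : (((2*k) ! : ℝ)) ≠ 0 := by exact_mod_cast (Nat.factorial_ne_zero (2*k))
  have h5 : (((2*j) ! : ℝ)) ≠ 0 := by exact_mod_cast (Nat.factorial_ne_zero (2*j))
  have h6 : (((2*(k+j)) ! : ℝ)) ≠ 0 := by exact_mod_cast (Nat.factorial_ne_zero (2*(k+j)))
  have h7 : ((4:ℝ))^(k+j) ≠ 0 := by positivity
  field_simp

lemma ent_eq (k j : ℕ) (hk : 1 ≤ k) (hj : 1 ≤ j) :
    (2:ℝ) ^ (-(((k:ℝ)+(j:ℝ))) * binEnt ((k : ℝ) / ((k:ℝ)+(j:ℝ))))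
      = ((k:ℝ)^k * (j:ℝ)^j) / ((k:ℝ)+(j:ℝ))^(k+j) := by
  have hk0 : (0:ℝ) < k := by exact_mod_cast hk
  have hj0 : (0:ℝ) < j := by exact_mod_cast hj
  have hN : (0:ℝ) < (k:ℝ)+(j:ℝ) := by positivity
  have h1p : 1 - (k:ℝ)/((k:ℝ)+(j:ℝ)) = (j:ℝ)/((k:ℝ)+(j:ℝ)) := by field_simp; ring
  have hexp : -(((k:ℝ)+(j:ℝ))) * binEnt ((k : ℝ) / ((k:ℝ)+(j:ℝ)))
      = Real.logb 2 ((k:ℝ)/((k:ℝ)+(j:ℝ))) * (k:ℝ) + Real.logb 2 ((j:ℝ)/((k:ℝ)+(j:ℝ))) * (j:ℝ) := by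
    rw [binEnt, h1p]
    field_simp
    ring
  have hp : (0:ℝ) < (k:ℝ)/((k:ℝ)+(j:ℝ)) := by positivity
  have hq : (0:ℝ) < (j:ℝ)/((k:ℝ)+(j:ℝ)) := by positivity
  rw [hexp, Real.rpow_add (by norm_num : (0:ℝ) < 2),
      Real.rpow_mul (by norm_num : (0:ℝ) ≤ 2), Real.rpow_mul (by norm_num : (0:ℝ) ≤ 2),
      Real.rpow_logb (by norm_num) (by norm_num) hp,
      Real.rpow_logb (by norm_num) (by norm_num) hq,
      Real.rpow_natCast, Real.rpow_natCast, div_pow, div_pow, pow_add]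
  field_simp

lemma central_le (n : ℕ) (hn : 0 < n) :
    ((2*n).choose n : ℝ) / 4^n ≤ Real.sqrt (8/Real.pi^2) * (1/Real.sqrt n) := by
  have hN0 : (0:ℝ) < n := by exact_mod_cast hn
  have hC : (((2*n).choose n : ℝ)) = ((2*n)! : ℝ) / ((n ! : ℝ) * (n ! : ℝ)) := by
    rw [Nat.cast_choose ℝ (by omega : n ≤ 2*n), show 2*n - n = n from by omega]
  have hXnn : (0:ℝ) ≤ ((2*n).choose n : ℝ) / 4^n := by positivity
  have hRnn : (0:ℝ) ≤ Real.sqrt (8/Real.pi^2) * (1/Real.sqrt n) := by positivity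
  refine le_of_pow_le_pow_left₀ (two_ne_zero) hRnn ?_
  have hfn : ((n ! : ℝ)) ≠ 0 := by exact_mod_cast (Nat.factorial_ne_zero n)
  have hsnpos := stirling_pos' n hn
  have hs2npos := stirling_pos' (2*n) (by omega)
  have hX2 : (((2*n).choose n : ℝ) / 4^n)^2
      = (stirlingSeq (2*n))^2/((stirlingSeq n)^2)^2 * (1/n) := by
    rw [hC, div_pow, div_pow, mul_pow, fact_sq' (2*n) (by omega), fact_sq' n (by omega),
        show ((4:ℝ))^n = 2^(2*n) from by rw [show (4:ℝ) = 2^2 from by norm_num, ← pow_mul]]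
    push_cast
    field_simp [-Real.exp_one_pow]
    simp only [← Real.exp_nat_mul, ← Real.exp_add]
    push_cast
    ring_nf
  have hR2 : (Real.sqrt (8/Real.pi^2) * (1/Real.sqrt n))^2 = 8/Real.pi^2 * (1/n) := by
    rw [mul_pow, Real.sq_sqrt (by positivity), div_pow, one_pow, Real.sq_sqrt hN0.le]
  rw [hX2, hR2]
  have hpi := stirling_sq_ge n hn
  have h1 : (stirlingSeq (2*n))^2/((stirlingSeq n)^2)^2 ≤ 1/(stirlingSeq n)^2 := by
    have h2 : (stirlingSeq (2*n))^2 ≤ (stirlingSeq n)^2 :=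
      pow_le_pow_left₀ hs2npos.le (stirling_double_le n hn) 2
    calc (stirlingSeq (2*n))^2/((stirlingSeq n)^2)^2
        ≤ (stirlingSeq n)^2/((stirlingSeq n)^2)^2 := by gcongr
      _ = 1/(stirlingSeq n)^2 := by field_simp
  have h3 : 1/(stirlingSeq n)^2 ≤ 8/Real.pi^2 := by
    rw [div_le_div_iff₀ (by positivity) (by positivity)]
    nlinarith [Real.pi_pos, Real.pi_le_four]
  calc (stirlingSeq (2*n))^2/((stirlingSeq n)^2)^2 * (1/(n:ℝ))
      ≤ 1/(stirlingSeq n)^2 * (1/(n:ℝ)) := by gcongr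
    _ ≤ 8/Real.pi^2 * (1/(n:ℝ)) := by gcongr

theorem kt_prob_bound (n k : ℕ) (hn : 0 < n) (hk : k ≤ n) :
    (1 / 4 ^ n : ℝ) * (Nat.choose n k : ℝ) * (Nat.choose (2 * n) n : ℝ) /
        (Nat.choose (2 * n) (2 * k) : ℝ) ≤
      Real.sqrt (8 / Real.pi ^ 2) *
        ((2 : ℝ) ^ (-(n : ℝ) * binEnt ((k : ℝ) / n)) / Real.sqrt n) := by
  have hN0 : (0:ℝ) < n := by exact_mod_cast hn
  rcases Nat.eq_zero_or_pos k with rfl | hk1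
  · -- k = 0
    have hb0 : binEnt ((0:ℕ) / (n:ℝ)) = 0 := by simp [binEnt]
    rw [show ((0:ℕ):ℝ) = (0:ℝ) from by norm_num] at hb0 ⊢
    rw [hb0]
    simp only [Nat.choose_zero_right, Nat.cast_one, mul_one, Nat.mul_zero, Nat.choose_zero_right,
      mul_zero, Real.rpow_zero]
    have := central_le n hn
    calc (1/4^n : ℝ) * ((2*n).choose n : ℝ) / 1
        = ((2*n).choose n : ℝ) / 4^n := by ring
      _ ≤ Real.sqrt (8/Real.pi^2) * (1/Real.sqrt n) := central_le n hn
  rcases eq_or_lt_of_le hk with rfl | hlt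
  · -- n = k
    have hb1 : binEnt ((k:ℝ) / (k:ℝ)) = 0 := by
      rw [div_self (by positivity : (k:ℝ) ≠ 0)]
      simp [binEnt]
    rw [hb1]
    simp only [Nat.choose_self, Nat.cast_one, mul_one, mul_zero, Real.rpow_zero]
    calc (1/4^k : ℝ) * ((2*k).choose k : ℝ) / 1
        = ((2*k).choose k : ℝ) / 4^k := by ring
      _ ≤ Real.sqrt (8/Real.pi^2) * (1/Real.sqrt k) := central_le k hk1
  -- main case 1 ≤ k < n
  obtain ⟨j, rfl⟩ : ∃ j, n = k + j := ⟨n - k, by omega⟩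
  have hj1 : 1 ≤ j := by omega
  have hk0 : (0:ℝ) < k := by exact_mod_cast hk1
  have hj0 : (0:ℝ) < j := by exact_mod_cast hj1
  rw [kt_cast_eq]
  push_cast
  rw [ent_eq k j hk1 hj1]
  set P : ℝ := ((k:ℝ)^k * (j:ℝ)^j) / ((k:ℝ)+(j:ℝ))^(k+j) with hP
  have hPpos : 0 < P := by positivity
  have hNpos : (0:ℝ) < (k:ℝ)+(j:ℝ) := by positivity
  have hRnn : (0:ℝ) ≤ Real.sqrt (8/Real.pi^2) * (P / Real.sqrt ((k:ℝ)+(j:ℝ))) := by positivity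
  refine le_of_pow_le_pow_left₀ (two_ne_zero) hRnn ?_
  have hsk := stirling_pos' k hk1
  have hsj := stirling_pos' j hj1
  have hsn := stirling_pos' (k+j) (by omega)
  have hs2k := stirling_pos' (2*k) (by omega)
  have hs2j := stirling_pos' (2*j) (by omega)
  have hfk : ((k ! : ℝ)) ≠ 0 := by exact_mod_cast (Nat.factorial_ne_zero k)
  have hfj : ((j ! : ℝ)) ≠ 0 := by exact_mod_cast (Nat.factorial_ne_zero j)
  have hfn : (((k+j) ! : ℝ)) ≠ 0 := by exact_mod_cast (Nat.factorial_ne_zero (k+j))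
  have hF2 : (((2*k)! : ℝ) * ((2*j)! : ℝ) / (((k)! : ℝ) * ((j)! : ℝ) * (((k+j))! : ℝ) * 4^(k+j)))^2
      = (stirlingSeq (2*k) * stirlingSeq (2*j))^2 / (stirlingSeq k * stirlingSeq j * stirlingSeq (k+j))^2
        * (2 * (P^2 / ((k:ℝ)+(j:ℝ)))) := by
    rw [hP, div_pow]
    simp only [mul_pow]
    rw [fact_sq' (2*k) (by omega), fact_sq' (2*j) (by omega),
        fact_sq' k hk1, fact_sq' j hj1, fact_sq' (k+j) (by omega),
        show ((4:ℝ))^(k+j) = 2^(2*(k+j)) from by rw [show (4:ℝ) = 2^2 from by norm_num, ← pow_mul]]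
    push_cast
    field_simp [-Real.exp_one_pow]
    simp only [← Real.exp_nat_mul, ← Real.exp_add]
    push_cast
    ring_nf
    have hE : Real.exp ((k:ℝ)*2) * Real.exp ((j:ℝ)*2) * Real.exp ((k:ℝ)*2+(j:ℝ)*2)
        = Real.exp ((k:ℝ)*4+(j:ℝ)*4) := by
      rw [← Real.exp_add, ← Real.exp_add]; congr 1; ring
    linear_combination ((k:ℝ) ^ (k * 4) * (j:ℝ) ^ (j * 4) * 2 ^ (k * 4) * 2 ^ (j * 4) *
      ((k:ℝ) + j) ^ (k * 2) * ((k:ℝ) + j) ^ (j * 2)) * hE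
  have hR2 : (Real.sqrt (8/Real.pi^2) * (P / Real.sqrt ((k:ℝ)+(j:ℝ))))^2
      = 8/Real.pi^2 * (P^2/((k:ℝ)+(j:ℝ))) := by
    rw [mul_pow, Real.sq_sqrt (by positivity), div_pow, Real.sq_sqrt hNpos.le]
  rw [hF2, hR2]
  have hratio : (stirlingSeq (2*k) * stirlingSeq (2*j))^2
      / (stirlingSeq k * stirlingSeq j * stirlingSeq (k+j))^2 ≤ 1/Real.pi := by
    have h2 : (stirlingSeq (2*k) * stirlingSeq (2*j))^2 ≤ (stirlingSeq k * stirlingSeq j)^2 := by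
      have := stirling_double_le k hk1
      have := stirling_double_le j hj1
      gcongr <;> positivity
    have hpi := stirling_sq_ge (k+j) (by omega)
    calc (stirlingSeq (2*k) * stirlingSeq (2*j))^2
          / (stirlingSeq k * stirlingSeq j * stirlingSeq (k+j))^2
        ≤ (stirlingSeq k * stirlingSeq j)^2 / (stirlingSeq k * stirlingSeq j * stirlingSeq (k+j))^2 := by
          gcongr
      _ = 1/(stirlingSeq (k+j))^2 := by rw [mul_pow]; field_simp
      _ ≤ 1/Real.pi := by
          rw [div_le_div_iff₀ (by positivity) Real.pi_pos]
          nlinarith [Real.pi_pos]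
  calc (stirlingSeq (2*k) * stirlingSeq (2*j))^2
        / (stirlingSeq k * stirlingSeq j * stirlingSeq (k+j))^2 * (2 * (P^2 / ((k:ℝ)+(j:ℝ))))
      ≤ 1/Real.pi * (2 * (P^2 / ((k:ℝ)+(j:ℝ)))) := by gcongr
    _ ≤ 8/Real.pi^2 * (P^2/((k:ℝ)+(j:ℝ))) := by
        have ht : 0 < P^2/((k:ℝ)+(j:ℝ)) := by positivity
        rw [div_mul_eq_mul_div, div_mul_eq_mul_div, div_le_div_iff₀ Real.pi_pos (by positivity)]
        nlinarith [mul_pos ht Real.pi_pos, Real.pi_le_four]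
end

section
/- For every positive integer d, (1/B(d/2,d/2))·(1/4)^{d/2-1} ≤ 2√d, where B is the beta function. -/
open Real

lemma wendel {x : ℝ} (hx : 0 < x) : Gamma (x + 1/2) ≤ Real.sqrt x * Gamma x := by
  have hG : 0 < Gamma x := Gamma_pos_of_pos hx
  have hG1 : 0 < Gamma (x + 1) := Gamma_pos_of_pos (by linarith)
  have hc := convexOn_log_Gamma.2 (Set.mem_Ioi.mpr hx) (Set.mem_Ioi.mpr (show (0:ℝ) < x + 1 by linarith))
      (by norm_num : (0:ℝ) ≤ 1/2) (by norm_num : (0:ℝ) ≤ 1/2) (by norm_num)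
  simp only [smul_eq_mul, Function.comp_apply] at hc
  have hmid : (1/2 : ℝ) * x + 1/2 * (x + 1) = x + 1/2 := by ring
  rw [hmid] at hc
  have h1 : Gamma (x + 1/2) ≤ Real.exp (1/2 * log (Gamma x) + 1/2 * log (Gamma (x+1))) := by
    calc Gamma (x + 1/2) = Real.exp (log (Gamma (x + 1/2))) :=
          (Real.exp_log (Gamma_pos_of_pos (by linarith))).symm
      _ ≤ _ := Real.exp_le_exp.mpr hc
  refine h1.trans ?_
  rw [Real.exp_add, ← Real.log_rpow hG, ← Real.log_rpow hG1, Real.exp_log (rpow_pos_of_pos hG _),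
    Real.exp_log (rpow_pos_of_pos hG1 _), Gamma_add_one hx.ne']
  rw [Real.mul_rpow hx.le hG.le]
  have e1 : Gamma x ^ (1/2:ℝ) * Gamma x ^ (1/2:ℝ) = Gamma x := by
    rw [← Real.rpow_add hG]; norm_num
  have e2 : x ^ (1/2:ℝ) = Real.sqrt x := (Real.sqrt_eq_rpow x).symm
  calc Gamma x ^ (1/2:ℝ) * (x ^ (1/2:ℝ) * Gamma x ^ (1/2:ℝ))
      = x ^ (1/2:ℝ) * (Gamma x ^ (1/2:ℝ) * Gamma x ^ (1/2:ℝ)) := by ring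
    _ = Real.sqrt x * Gamma x := by rw [e1, e2]
    _ ≤ _ := le_rfl

theorem beta_function_bound (d : ℕ) (hd : 0 < d) :
    (1 / (Real.Gamma ((d : ℝ) / 2) ^ 2 / Real.Gamma d)) * ((1 : ℝ) / 4) ^ ((d : ℝ) / 2 - 1) ≤
      2 * Real.sqrt d := by
  set x : ℝ := (d : ℝ) / 2 with hxdef
  have hx : 0 < x := by positivity
  have hdup := Real.Gamma_mul_Gamma_add_half x
  have h2x : 2 * x = (d : ℝ) := by rw [hxdef]; ring
  rw [h2x] at hdup
  have hGx : 0 < Gamma x := Gamma_pos_of_pos hx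
  have hGh : 0 < Gamma (x + 1/2) := Gamma_pos_of_pos (by linarith)
  have hGd : 0 < Gamma d := Gamma_pos_of_pos (by exact_mod_cast hd)
  have hsp : 0 < Real.sqrt π := Real.sqrt_pos.mpr pi_pos
  set a : ℝ := (2:ℝ) ^ ((1:ℝ) - d) with ha
  have hap : 0 < a := rpow_pos_of_pos two_pos _
  have h14 : ((1:ℝ)/4) = (2:ℝ)^(-2:ℝ) := by
    rw [Real.rpow_neg two_pos.le, show (2:ℝ) = ((2:ℕ):ℝ) by norm_num, Real.rpow_natCast]
    norm_num
  have h2a : (2:ℝ)^((2:ℝ)-(d:ℝ)) = 2 * a := by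
    rw [show (2:ℝ)-(d:ℝ) = 1+(1-(d:ℝ)) by ring, Real.rpow_add two_pos, Real.rpow_one, ha]
  have hpow : ((1:ℝ)/4) ^ (x - 1) = 2 * a := by
    rw [h14, ← Real.rpow_mul two_pos.le, ← h2a]
    congr 1
    rw [← h2x]; ring
  have hw := wendel hx
  set G1 := Gamma x
  set G2 := Gamma (x + 1/2)
  set G3 := Gamma (d:ℝ)
  have key : (1 / (G1 ^ 2 / G3)) * ((1:ℝ)/4) ^ (x - 1)
      = 2 * G2 / (Real.sqrt π * G1) := by
    rw [hpow]
    field_simp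
    linear_combination (-1) * hdup
  rw [key, div_le_iff₀ (by positivity)]
  have hxd : Real.sqrt x ≤ Real.sqrt (d:ℝ) := Real.sqrt_le_sqrt (by
    rw [hxdef]
    have : (0:ℝ) ≤ d := Nat.cast_nonneg d
    linarith)
  have hpi1 : (1:ℝ) ≤ Real.sqrt π := by
    rw [show (1:ℝ) = Real.sqrt 1 by simp]
    exact Real.sqrt_le_sqrt (by nlinarith [pi_gt_three])
  calc 2 * G2 ≤ 2 * (Real.sqrt x * G1) := by nlinarith
    _ ≤ 2 * Real.sqrt d * (Real.sqrt π * G1) := by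
        nlinarith [mul_le_mul_of_nonneg_right hxd hGx.le,
          mul_le_mul_of_nonneg_right hpi1 (mul_nonneg (sqrt_nonneg (d:ℝ)) hGx.le)]
end

section
/- Let K | N ~ Binomial(N, θ) for θ ∈ [0,1] and a nonnegative integer N. Then P(|(K + 1/2)/(N+1) - θ| > 1/8) ≤ 2√e · e^{-N/32}. -/
private lemma taylor_lb :
    (14596592569312184043347710944121 / 11250000000000000000000000000000 : ℝ) ≤
      Real.exp (13021 / 50000) := by
  have h := Real.sum_le_exp_of_nonneg (by norm_num : (0:ℝ) ≤ 13021 / 50000) 7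
  have he : ∑ i ∈ Finset.range 7, ((13021 / 50000 : ℝ)) ^ i / (Nat.factorial i : ℝ) =
      (14596592569312184043347710944121 / 11250000000000000000000000000000 : ℝ) := by
    rw [Finset.sum_range_succ, Finset.sum_range_succ, Finset.sum_range_succ,
      Finset.sum_range_succ, Finset.sum_range_succ, Finset.sum_range_succ,
      Finset.sum_range_succ, Finset.sum_range_zero]
    norm_num [Nat.factorial]
  rw [← he]; exact h

private lemma exp_half_ub :
    Real.exp (1 / 2) ≤ 1 + (14596592569312184043347710944121 / 11250000000000000000000000000000 : ℝ) / 2 := by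
  have hsq : Real.exp (1 / 2) * Real.exp (1 / 2) = Real.exp 1 := by
    rw [← Real.exp_add]; norm_num
  have he := Real.exp_one_lt_d9
  nlinarith [Real.exp_pos (1 / 2 : ℝ)]

private lemma key_ineq (θ : ℝ) (h0 : 0 ≤ θ) (h1 : θ ≤ 1) :
    1 - θ + θ * Real.exp (1 / 2) ≤ Real.exp (θ / 2 + 1 / 32) := by
  set P : ℝ := 14596592569312184043347710944121 / 11250000000000000000000000000000 with hP
  set q : ℝ := 13021 / 50000 with hq
  have hfac : (0 : ℝ) ≤ 1 + (θ / 2 + 1 / 32 - q) := by rw [hq]; linarith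
  have htan : Real.exp q * (1 + (θ / 2 + 1 / 32 - q)) ≤ Real.exp (θ / 2 + 1 / 32) := by
    have h := Real.add_one_le_exp (θ / 2 + 1 / 32 - q)
    have := mul_le_mul_of_nonneg_left h (Real.exp_pos q).le
    rw [← Real.exp_add] at this
    calc Real.exp q * (1 + (θ / 2 + 1 / 32 - q))
        = Real.exp q * (θ / 2 + 1 / 32 - q + 1) := by ring
      _ ≤ Real.exp (q + (θ / 2 + 1 / 32 - q)) := this
      _ = Real.exp (θ / 2 + 1 / 32) := by ring_nf
  calc 1 - θ + θ * Real.exp (1 / 2)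
      ≤ 1 - θ + θ * (1 + P / 2) := by
        have := mul_le_mul_of_nonneg_left exp_half_ub h0
        linarith
    _ ≤ P * (1 + (θ / 2 + 1 / 32 - q)) := by rw [hP, hq]; nlinarith
    _ ≤ Real.exp q * (1 + (θ / 2 + 1 / 32 - q)) :=
        mul_le_mul_of_nonneg_right taylor_lb hfac
    _ ≤ Real.exp (θ / 2 + 1 / 32) := htan

private lemma key_ineq' (θ : ℝ) (h0 : 0 ≤ θ) (h1 : θ ≤ 1) :
    1 - θ + θ * Real.exp (-(1 / 2)) ≤ Real.exp (-θ / 2 + 1 / 32) := by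
  have h := key_ineq (1 - θ) (by linarith) (by linarith)
  have hmul := mul_le_mul_of_nonneg_left h (Real.exp_pos (-(1 / 2))).le
  rw [← Real.exp_add] at hmul
  have h2 : Real.exp (-(1 / 2)) * (1 - (1 - θ) + (1 - θ) * Real.exp (1 / 2))
      = θ * Real.exp (-(1 / 2)) + (1 - θ) * (Real.exp (-(1 / 2)) * Real.exp (1 / 2)) := by ring
  rw [h2, ← Real.exp_add] at hmul
  norm_num at hmul
  calc 1 - θ + θ * Real.exp (-(1 / 2)) = θ * Real.exp (-(1 / 2)) + (1 - θ) := by ring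
    _ ≤ Real.exp (-(1 / 2) + ((1 - θ) / 2 + 1 / 32)) := by
        convert hmul using 2 <;> norm_num
    _ = Real.exp (-θ / 2 + 1 / 32) := by ring_nf

private lemma binom_sum (N : ℕ) (θ r : ℝ) :
    ∑ k ∈ Finset.range (N + 1),
        r ^ k * ((Nat.choose N k : ℝ) * θ ^ k * (1 - θ) ^ (N - k)) =
      (θ * r + (1 - θ)) ^ N := by
  rw [add_pow]
  refine Finset.sum_congr rfl fun k _ => ?_
  rw [mul_pow]; ring

theorem kt_estimator_concentration (N : ℕ) (θ : ℝ) (hθ : θ ∈ Set.Icc (0:ℝ) 1) :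
    (∑ k ∈ Finset.range (N + 1),
        if |((k : ℝ) + 1 / 2) / ((N : ℝ) + 1) - θ| > 1 / 8 then
          (Nat.choose N k : ℝ) * θ ^ k * (1 - θ) ^ (N - k)
        else 0) ≤
      2 * Real.sqrt (Real.exp 1) * Real.exp (-(N : ℝ) / 32) := by
  obtain ⟨h0, h1⟩ := hθ
  set p : ℕ → ℝ := fun k => (Nat.choose N k : ℝ) * θ ^ k * (1 - θ) ^ (N - k) with hpdef
  have hp : ∀ k, 0 ≤ p k := fun k =>
    mul_nonneg (mul_nonneg (Nat.cast_nonneg _) (pow_nonneg h0 _))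
      (pow_nonneg (by linarith) _)
  have hN1 : (0 : ℝ) < (N : ℝ) + 1 := by positivity
  -- termwise bound
  have hterm : ∀ k ∈ Finset.range (N + 1),
      (if |((k : ℝ) + 1 / 2) / ((N : ℝ) + 1) - θ| > 1 / 8 then p k else 0) ≤
        Real.exp ((1/2) * ((k : ℝ) - N * θ - N / 8 + 3 / 8)) * p k +
        Real.exp ((1/2) * (N * θ - N / 8 + 3 / 8 - (k : ℝ))) * p k := by
    intro k _
    have hnn1 : 0 ≤ Real.exp ((1/2) * ((k : ℝ) - N * θ - N / 8 + 3 / 8)) * p k :=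
      mul_nonneg (Real.exp_pos _).le (hp k)
    have hnn2 : 0 ≤ Real.exp ((1/2) * (N * θ - N / 8 + 3 / 8 - (k : ℝ))) * p k :=
      mul_nonneg (Real.exp_pos _).le (hp k)
    split_ifs with h
    · rcases lt_abs.mp h with h' | h'
      · -- upper tail
        have hk : (θ + 1 / 8) * ((N : ℝ) + 1) < (k : ℝ) + 1 / 2 := by
          have h'' : θ + 1 / 8 < ((k : ℝ) + 1 / 2) / ((N : ℝ) + 1) := by linarith
          exact (lt_div_iff₀ hN1).mp h''
        have hone : 1 ≤ Real.exp ((1/2) * ((k : ℝ) - N * θ - N / 8 + 3 / 8)) :=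
          Real.one_le_exp (by nlinarith)
        have := le_mul_of_one_le_left (hp k) hone
        linarith
      · -- lower tail
        have hk : ((k : ℝ) + 1 / 2) < (θ - 1 / 8) * ((N : ℝ) + 1) := by
          have : ((k : ℝ) + 1 / 2) / ((N : ℝ) + 1) < θ - 1 / 8 := by linarith
          rw [div_lt_iff₀ hN1] at this; linarith
        have hone : 1 ≤ Real.exp ((1/2) * (N * θ - N / 8 + 3 / 8 - (k : ℝ))) :=
          Real.one_le_exp (by nlinarith)
        have := le_mul_of_one_le_left (hp k) hone
        linarith
    · linarith
  -- sums of the two exponential-weighted families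
  have hsumU : ∑ k ∈ Finset.range (N + 1),
      Real.exp ((1/2) * ((k : ℝ) - N * θ - N / 8 + 3 / 8)) * p k =
      Real.exp ((3 / 8 - N * θ - N / 8) / 2) * (θ * Real.exp (1/2) + (1 - θ)) ^ N := by
    rw [← binom_sum N θ (Real.exp (1/2)), Finset.mul_sum]
    refine Finset.sum_congr rfl fun k _ => ?_
    rw [show (1/2 : ℝ) * ((k : ℝ) - N * θ - N / 8 + 3 / 8) =
        (k : ℝ) * (1/2) + (3 / 8 - N * θ - N / 8) / 2 by ring,
      Real.exp_add, Real.exp_nat_mul]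
    ring
  have hsumL : ∑ k ∈ Finset.range (N + 1),
      Real.exp ((1/2) * (N * θ - N / 8 + 3 / 8 - (k : ℝ))) * p k =
      Real.exp ((N * θ - N / 8 + 3 / 8) / 2) * (θ * Real.exp (-(1/2)) + (1 - θ)) ^ N := by
    rw [← binom_sum N θ (Real.exp (-(1/2))), Finset.mul_sum]
    refine Finset.sum_congr rfl fun k _ => ?_
    rw [show (1/2 : ℝ) * (N * θ - N / 8 + 3 / 8 - (k : ℝ)) =
        (k : ℝ) * (-(1/2)) + (N * θ - N / 8 + 3 / 8) / 2 by ring,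
      Real.exp_add, Real.exp_nat_mul]
    ring
  -- bound the two pieces
  have hpowU : (θ * Real.exp (1/2) + (1 - θ)) ^ N ≤ Real.exp ((N : ℝ) * (θ / 2 + 1 / 32)) := by
    rw [Real.exp_nat_mul]
    refine pow_le_pow_left₀ ?_ ?_ N
    · have := Real.exp_pos (1/2 : ℝ); nlinarith
    · have := key_ineq θ h0 h1; linarith
  have hpowL : (θ * Real.exp (-(1/2)) + (1 - θ)) ^ N ≤ Real.exp ((N : ℝ) * (-θ / 2 + 1 / 32)) := by
    rw [Real.exp_nat_mul]
    refine pow_le_pow_left₀ ?_ ?_ N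
    · have := Real.exp_pos (-(1/2) : ℝ); nlinarith
    · have := key_ineq' θ h0 h1; linarith
  have hU : Real.exp ((3 / 8 - N * θ - N / 8) / 2) * (θ * Real.exp (1/2) + (1 - θ)) ^ N ≤
      Real.exp (3 / 16) * Real.exp (-(N : ℝ) / 32) := by
    calc Real.exp ((3 / 8 - N * θ - N / 8) / 2) * (θ * Real.exp (1/2) + (1 - θ)) ^ N
        ≤ Real.exp ((3 / 8 - N * θ - N / 8) / 2) * Real.exp ((N : ℝ) * (θ / 2 + 1 / 32)) :=
          mul_le_mul_of_nonneg_left hpowU (Real.exp_pos _).le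
      _ = Real.exp (3 / 16) * Real.exp (-(N : ℝ) / 32) := by
          rw [← Real.exp_add, ← Real.exp_add]; ring_nf
  have hL : Real.exp ((N * θ - N / 8 + 3 / 8) / 2) * (θ * Real.exp (-(1/2)) + (1 - θ)) ^ N ≤
      Real.exp (3 / 16) * Real.exp (-(N : ℝ) / 32) := by
    calc Real.exp ((N * θ - N / 8 + 3 / 8) / 2) * (θ * Real.exp (-(1/2)) + (1 - θ)) ^ N
        ≤ Real.exp ((N * θ - N / 8 + 3 / 8) / 2) * Real.exp ((N : ℝ) * (-θ / 2 + 1 / 32)) :=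
          mul_le_mul_of_nonneg_left hpowL (Real.exp_pos _).le
      _ = Real.exp (3 / 16) * Real.exp (-(N : ℝ) / 32) := by
          rw [← Real.exp_add, ← Real.exp_add]; ring_nf
  have hsqrt : Real.sqrt (Real.exp 1) = Real.exp (1/2) := by
    have hh : Real.exp (1/2) * Real.exp (1/2) = Real.exp 1 := by
      rw [← Real.exp_add]; norm_num
    rw [← hh, Real.sqrt_mul_self (Real.exp_pos _).le]
  have hexp316 : Real.exp (3/16 : ℝ) ≤ Real.exp (1/2) := Real.exp_le_exp.mpr (by norm_num)
  calc (∑ k ∈ Finset.range (N + 1),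
        if |((k : ℝ) + 1 / 2) / ((N : ℝ) + 1) - θ| > 1 / 8 then p k else 0)
      ≤ ∑ k ∈ Finset.range (N + 1),
          (Real.exp ((1/2) * ((k : ℝ) - N * θ - N / 8 + 3 / 8)) * p k +
           Real.exp ((1/2) * (N * θ - N / 8 + 3 / 8 - (k : ℝ))) * p k) :=
        Finset.sum_le_sum hterm
    _ = (∑ k ∈ Finset.range (N + 1),
          Real.exp ((1/2) * ((k : ℝ) - N * θ - N / 8 + 3 / 8)) * p k) +
        (∑ k ∈ Finset.range (N + 1),
          Real.exp ((1/2) * (N * θ - N / 8 + 3 / 8 - (k : ℝ))) * p k) :=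
        Finset.sum_add_distrib
    _ ≤ Real.exp (3 / 16) * Real.exp (-(N : ℝ) / 32) +
        Real.exp (3 / 16) * Real.exp (-(N : ℝ) / 32) := by
        rw [hsumU, hsumL]; exact add_le_add hU hL
    _ ≤ 2 * Real.sqrt (Real.exp 1) * Real.exp (-(N : ℝ) / 32) := by
        rw [hsqrt]
        have hE := (Real.exp_pos (-(N : ℝ) / 32)).le
        nlinarith
end
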